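/- Let the unshifted CR sequences be W₀ = A − I, Z₀ = 2(A+I), W_{ℓ+1} = −W_ℓZ_ℓ^{-1}W_ℓ, Z_{ℓ+1} = Z_ℓ + 2W_{ℓ+1}, where A is a singular M-matrix with Au = 0, u > 0, and each Z_ℓ is invertible. Then for all ℓ ≥ 0: Z_ℓ u = 2^{1−ℓ} u and W_ℓ u = −2^{−ℓ} u; in particular W_ℓ Z_ℓ^{-1} u = −(1/2)u. -/

import Mathlib

open Matrix

noncomputable def toC {n : ℕ} (A : Matrix (Fin n) (Fin n) ℝ) : Matrix (Fin n) (Fin n) ℂ :=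
  A.map (fun x => (x : ℂ))

def IsEig {n : ℕ} (A : Matrix (Fin n) (Fin n) ℂ) (μ : ℂ) : Prop :=
  ∃ v : Fin n → ℂ, v ≠ 0 ∧ A *ᵥ v = μ • v

noncomputable def specRad {n : ℕ} (B : Matrix (Fin n) (Fin n) ℝ) : ℝ :=
  sSup {r : ℝ | ∃ μ : ℂ, IsEig (toC B) μ ∧ r = ‖μ‖}

def IsMmat {n : ℕ} (A : Matrix (Fin n) (Fin n) ℝ) : Prop :=
  ∃ (α : ℝ) (B : Matrix (Fin n) (Fin n) ℝ),
    (∀ i j, 0 ≤ B i j) ∧ specRad B ≤ α ∧ A = α • (1 : Matrix (Fin n) (Fin n) ℝ) - B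

lemma inv_mulVec_eig {n : ℕ} (Z : Matrix (Fin n) (Fin n) ℝ) (hZ : IsUnit Z)
    (u : Fin n → ℝ) (c : ℝ) (hc : c ≠ 0) (h : Z *ᵥ u = c • u) :
    Z⁻¹ *ᵥ u = c⁻¹ • u := by
  have hd : IsUnit Z.det := (Matrix.isUnit_iff_isUnit_det Z).mp hZ
  have h1 : Z⁻¹ *ᵥ (Z *ᵥ u) = u := by
    rw [Matrix.mulVec_mulVec, Matrix.nonsing_inv_mul Z hd, Matrix.one_mulVec]
  rw [h, Matrix.mulVec_smul] at h1
  calc Z⁻¹ *ᵥ u = c⁻¹ • (c • (Z⁻¹ *ᵥ u)) := by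
        rw [smul_smul, inv_mul_cancel₀ hc, one_smul]
    _ = c⁻¹ • u := by rw [h1]

/-- For the unshifted CR applied to a singular M-matrix with Au = 0, u > 0:
Z_ℓ u = 2^{1-ℓ} u and W_ℓ u = -2^{-ℓ} u; in particular W_ℓ Z_ℓ⁻¹ u = -(1/2) u. -/
theorem stmt17 {n : ℕ} (A : Matrix (Fin n) (Fin n) ℝ) (hA : IsMmat A)
    (u : Fin n → ℝ) (hu : ∀ i, 0 < u i) (hAu : A *ᵥ u = 0)
    (W Z : ℕ → Matrix (Fin n) (Fin n) ℝ)
    (hW0 : W 0 = A - 1) (hZ0 : Z 0 = (2 : ℝ) • (A + 1))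
    (hWrec : ∀ ℓ, W (ℓ+1) = -(W ℓ * (Z ℓ)⁻¹ * W ℓ))
    (hZrec : ∀ ℓ, Z (ℓ+1) = Z ℓ + (2 : ℝ) • W (ℓ+1))
    (hZinv : ∀ ℓ, IsUnit (Z ℓ)) :
    ∀ ℓ : ℕ, Z ℓ *ᵥ u = ((2 : ℝ) ^ (1 - (ℓ : ℤ))) • u ∧
      W ℓ *ᵥ u = (-((2 : ℝ) ^ (-(ℓ : ℤ)))) • u ∧
      W ℓ *ᵥ ((Z ℓ)⁻¹ *ᵥ u) = (-(1/2 : ℝ)) • u := by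
  have two_ne : (2 : ℝ) ≠ 0 := two_ne_zero
  have key : ∀ ℓ : ℕ, Z ℓ *ᵥ u = ((2 : ℝ) ^ (1 - (ℓ : ℤ))) • u ∧
      W ℓ *ᵥ u = (-((2 : ℝ) ^ (-(ℓ : ℤ)))) • u := by
    intro ℓ
    induction ℓ with
    | zero =>
      constructor
      · rw [hZ0, Matrix.smul_mulVec, Matrix.add_mulVec, hAu, Matrix.one_mulVec]
        norm_num
      · rw [hW0, Matrix.sub_mulVec, hAu, Matrix.one_mulVec]
        norm_num
    | succ ℓ ih =>
      obtain ⟨hZℓ, hWℓ⟩ := ih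
      have hcpos : (0 : ℝ) < (2 : ℝ) ^ (1 - (ℓ : ℤ)) := by positivity
      have hZi := inv_mulVec_eig (Z ℓ) (hZinv ℓ) u _ (ne_of_gt hcpos) hZℓ
      have hW1 : W (ℓ+1) *ᵥ u = (-((2 : ℝ) ^ (-((ℓ:ℤ)+1)))) • u := by
        rw [hWrec, Matrix.neg_mulVec, ← Matrix.mulVec_mulVec, ← Matrix.mulVec_mulVec,
          hWℓ, Matrix.mulVec_smul, hZi, Matrix.mulVec_smul, Matrix.mulVec_smul, hWℓ]
        rw [smul_smul, smul_smul, ← neg_smul]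
        congr 1
        rw [← _root_.zpow_neg, neg_sub]
        simp only [neg_mul, mul_neg, neg_neg]
        congr 1
        rw [← zpow_add₀ two_ne, ← zpow_add₀ two_ne]
        congr 1
        omega
      refine ⟨?_, ?_⟩
      · rw [hZrec, Matrix.add_mulVec, Matrix.smul_mulVec, hZℓ, hW1, smul_smul,
          ← add_smul]
        congr 1
        push_cast
        rw [show (1:ℤ) - ((ℓ:ℤ)+1) = -(ℓ:ℤ) by ring,
          show (1:ℤ) - (ℓ:ℤ) = 1 + -(ℓ:ℤ) by ring,
          show -((ℓ:ℤ)+1) = -1 + -(ℓ:ℤ) by ring,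
          zpow_add₀ two_ne, zpow_add₀ two_ne]
        ring
      · rw [show (-(((ℓ:ℕ)+1 : ℕ) : ℤ)) = -((ℓ:ℤ)+1) by push_cast; ring, hW1]
  intro ℓ
  obtain ⟨hZℓ, hWℓ⟩ := key ℓ
  refine ⟨hZℓ, hWℓ, ?_⟩
  have hcpos : (0 : ℝ) < (2 : ℝ) ^ (1 - (ℓ : ℤ)) := by positivity
  have hZi := inv_mulVec_eig (Z ℓ) (hZinv ℓ) u _ (ne_of_gt hcpos) hZℓ
  rw [hZi, Matrix.mulVec_smul, hWℓ, smul_smul]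
  congr 1
  rw [← _root_.zpow_neg, neg_sub, mul_neg]
  rw [← zpow_add₀ two_ne, show (ℓ:ℤ) - 1 + -(ℓ:ℤ) = -1 by ring]
  norm_num
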